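/- Let X be a real n×2n matrix of rank n with Δ_I(X) ≥ 0 for every n-element subset I of {1,…,2n} and with X·R·Xᵀ = 0. Extend the columns of X to a 2n-periodic family (c_j)_{j∈ℤ}, where c_j is the column of X whose index is the representative of j mod 2n in {1,…,2n}, and define f : ℤ → ℤ by f(i) = min{ j ≥ i : c_i ∈ span_ℝ{c_{i+1},…,c_j} } (this minimum exists since the columns of X span ℝⁿ, so j = i+2n always works). Then f(f(i)−n) = i+n for all i ∈ ℤ; that is, the map i ↦ f(i)−n is an involution of ℤ. -/

import Mathlib

open Matrix

/-- `Δ_I(X)`: the determinant of the `n × n` submatrix of the `n × 2n` matrix `X`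
formed by the columns indexed by `I` (taken in increasing order); `0` if `I.card ≠ n`. -/
noncomputable def Delta {n : ℕ} (X : Matrix (Fin n) (Fin (2*n)) ℝ)
    (I : Finset (Fin (2*n))) : ℝ :=
  if h : I.card = n then
    (X.submatrix id (fun j : Fin n => ((I.orderIsoOfFin h j : Fin (2*n))))).det
  else 0

/-- The Gram matrix of the form `R(x,y) = Σ_{i=1}^n (−1)^{i−1}(x_i y_{n+i} − x_{n+i} y_i)`,
with `0`-based indices. -/
def Rmat (n : ℕ) : Matrix (Fin (2*n)) (Fin (2*n)) ℝ := fun i j =>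
  if (j : ℕ) = (i : ℕ) + n then (-1 : ℝ) ^ (i : ℕ)
  else if (i : ℕ) = (j : ℕ) + n then -(-1 : ℝ) ^ (j : ℕ)
  else 0

section
open Matrix Submodule Set
namespace Stmt4Aux


/-- residue map `ℤ → Fin (2n)` sending `j` to the 0-based index of its representative. -/
def rho (n : ℕ) (hn : 1 ≤ n) (j : ℤ) : Fin (2*n) :=
  ⟨((j - 1) % (2 * (n:ℤ))).toNat, by
    have hpos : (0:ℤ) < 2*(n:ℤ) := by omega
    have h1 := Int.emod_nonneg (j-1) (ne_of_gt hpos)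
    have h2 := Int.emod_lt_of_pos (j-1) hpos
    omega⟩

variable {n : ℕ}

lemma rho_val (hn : 1 ≤ n) (j : ℤ) : ((rho n hn j : ℕ) : ℤ) = (j - 1) % (2*(n:ℤ)) := by
  have hpos : (0:ℤ) < 2*(n:ℤ) := by omega
  exact Int.toNat_of_nonneg (Int.emod_nonneg _ (ne_of_gt hpos))

lemma rho_eq_iff (hn : 1 ≤ n) {j k : ℤ} :
    rho n hn j = rho n hn k ↔ (2*(n:ℤ)) ∣ (j - k) := by
  have hpos : (0:ℤ) < 2*(n:ℤ) := by omega
  constructor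
  · intro h
    have h2 : ((j:ℤ) - 1) % (2*(n:ℤ)) = (k - 1) % (2*(n:ℤ)) := by
      rw [← rho_val hn j, ← rho_val hn k, h]
    have := Int.emod_emod_of_dvd (j-1) (dvd_refl (2*(n:ℤ)))
    have h3 : ((j-1) - (k-1)) % (2*(n:ℤ)) = 0 :=
      Int.emod_eq_emod_iff_emod_sub_eq_zero.mp h2
    have : (j - k) % (2*(n:ℤ)) = 0 := by
      have : (j-1) - (k-1) = j - k := by ring
      rwa [this] at h3
    exact Int.dvd_of_emod_eq_zero this
  · intro h
    have h3 : ((j-1) - (k-1)) % (2*(n:ℤ)) = 0 := by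
      have : (j-1) - (k-1) = j - k := by ring
      rw [this]
      exact Int.emod_eq_zero_of_dvd h
    have h2 : (j - 1) % (2*(n:ℤ)) = (k - 1) % (2*(n:ℤ)) :=
      Int.emod_eq_emod_iff_emod_sub_eq_zero.mpr h3
    apply Fin.ext
    have := rho_val hn j
    have := rho_val hn k
    omega

lemma rho_add (hn : 1 ≤ n) (j : ℤ) : rho n hn (j + 2*n) = rho n hn j :=
  (rho_eq_iff hn).mpr ⟨1, by ring⟩

/-- shift by n on residues -/
def tau (n : ℕ) (hn : 1 ≤ n) (k : Fin (2*n)) : Fin (2*n) := rho n hn ((k:ℤ) + 1 + n)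

lemma rho_intCast_add_one (hn : 1 ≤ n) (k : Fin (2*n)) : rho n hn ((k:ℤ) + 1) = k := by
  apply Fin.ext
  have h1 : (((k:ℤ) + 1) - 1) % (2*(n:ℤ)) = (k:ℤ) := by
    have : ((k:ℤ) + 1) - 1 = (k:ℤ) := by ring
    rw [this]
    apply Int.emod_eq_of_lt (by positivity)
    exact_mod_cast k.isLt
  have := rho_val hn ((k:ℤ)+1)
  omega

lemma tau_rho (hn : 1 ≤ n) (j : ℤ) : tau n hn (rho n hn j) = rho n hn (j + n) := by
  unfold tau
  apply (rho_eq_iff hn).mpr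
  have := rho_val hn j
  have : ((rho n hn j : ℕ) : ℤ) + 1 + n - (j + n) = (j-1) % (2*(n:ℤ)) - (j - 1) := by omega
  rw [this]
  have hd : (2*(n:ℤ)) ∣ ((j-1) % (2*(n:ℤ)) - (j-1)) := by
    have := Int.emod_def (j-1) (2*(n:ℤ))
    rw [this]
    exact ⟨-((j-1)/(2*(n:ℤ))), by ring⟩
  exact hd

lemma tau_val (hn : 1 ≤ n) (k : Fin (2*n)) : ((tau n hn k : ℕ)) = ((k:ℕ) + n) % (2*n) := by
  unfold tau
  have h := rho_val hn ((k:ℤ) + 1 + n)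
  have h2 : ((k:ℤ) + 1 + n - 1) = ((k:ℕ) + n : ℕ) := by push_cast; ring
  rw [h2] at h
  have h3 : (((k:ℕ) + n : ℕ) : ℤ) % (2*(n:ℤ)) = ((((k:ℕ) + n) % (2*n) : ℕ) : ℤ) := by
    push_cast; ring_nf
  omega



variable {n : ℕ}

lemma tau_val_lt (hn : 1 ≤ n) {k : Fin (2*n)} (h : (k:ℕ) < n) :
    (tau n hn k : ℕ) = (k:ℕ) + n := by
  rw [tau_val hn]; exact Nat.mod_eq_of_lt (by omega)

lemma tau_val_ge (hn : 1 ≤ n) {k : Fin (2*n)} (h : n ≤ (k:ℕ)) :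
    (tau n hn k : ℕ) = (k:ℕ) - n := by
  have hk := k.isLt
  rw [tau_val hn]
  have e : (k:ℕ) + n = ((k:ℕ) - n) + 1*(2*n) := by omega
  rw [e, Nat.add_mul_mod_self_right]
  exact Nat.mod_eq_of_lt (by omega)

noncomputable def eps (n : ℕ) (k : Fin (2*n)) : ℝ :=
  if (k:ℕ) < n then (-1 : ℝ) ^ (k:ℕ) else -(-1 : ℝ) ^ ((k:ℕ) - n)

lemma eps_ne_zero (k : Fin (2*n)) : eps n k ≠ 0 := by
  unfold eps; split <;> simp

lemma neg_one_sq_pow (m : ℕ) : (-1:ℝ)^m * (-1:ℝ)^m = 1 := by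
  rw [← pow_add]; exact Even.neg_one_pow ⟨m, rfl⟩

lemma Rmat_apply_eq (hn : 1 ≤ n) (k j : Fin (2*n)) (hj : (j:ℕ) = ((k:ℕ) + n) % (2*n)) :
    Rmat n k j = eps n k := by
  have hk := k.isLt
  unfold Rmat eps
  rcases lt_or_ge (k:ℕ) n with h | h
  · have : (j:ℕ) = (k:ℕ) + n := by
      rw [hj]; exact Nat.mod_eq_of_lt (by omega)
    rw [if_pos this, if_pos (by omega)]
  · have hjv : (j:ℕ) = (k:ℕ) - n := by
      rw [hj]
      have e : (k:ℕ) + n = ((k:ℕ) - n) + 1 * (2*n) := by omega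
      rw [e, Nat.add_mul_mod_self_right]
      exact Nat.mod_eq_of_lt (by omega)
    rw [if_neg (by omega), if_pos (by omega), if_neg (by omega), hjv]

lemma Rmat_apply_ne (hn : 1 ≤ n) (k j : Fin (2*n)) (hj : (j:ℕ) ≠ ((k:ℕ) + n) % (2*n)) :
    Rmat n k j = 0 := by
  have hk := k.isLt
  have hjlt := j.isLt
  unfold Rmat
  rcases lt_or_ge (k:ℕ) n with h | h
  · have hmod : ((k:ℕ) + n) % (2*n) = (k:ℕ) + n := Nat.mod_eq_of_lt (by omega)
    rw [if_neg (by omega), if_neg (by omega)]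
  · have hmod : ((k:ℕ) + n) % (2*n) = (k:ℕ) - n := by
      have e : (k:ℕ) + n = ((k:ℕ) - n) + 1 * (2*n) := by omega
      rw [e, Nat.add_mul_mod_self_right]
      exact Nat.mod_eq_of_lt (by omega)
    rw [if_neg (by omega), if_neg (by omega)]

lemma Rmat_mulVec (hn : 1 ≤ n) (v : Fin (2*n) → ℝ) (k : Fin (2*n)) :
    (Rmat n).mulVec v k = eps n k * v (tau n hn k) := by
  have e : (Rmat n).mulVec v k = ∑ j, Rmat n k j * v j := rfl
  rw [e, Finset.sum_eq_single (tau n hn k)]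
  · rw [Rmat_apply_eq hn k _ (tau_val hn k)]
  · intro j _ hne
    rw [Rmat_apply_ne hn k j, zero_mul]
    rw [← tau_val hn k]
    exact fun h => hne (Fin.ext h)
  · intro h; exact absurd (Finset.mem_univ _) h

lemma tau_tau_val (hn : 1 ≤ n) (k : Fin (2*n)) :
    ((k:ℕ)) = ((tau n hn k : ℕ) + n) % (2*n) := by
  have hk := k.isLt
  rw [tau_val hn, Nat.mod_add_mod]
  have e : (k:ℕ) + n + n = (k:ℕ) + 2*n := by ring
  rw [e, Nat.add_mod_right]
  exact (Nat.mod_eq_of_lt hk).symm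

lemma Rmat_mul_self (hn : 1 ≤ n) : Rmat n * Rmat n = -1 := by
  ext i j
  rw [Matrix.mul_apply, Finset.sum_eq_single (tau n hn i)]
  · rw [Rmat_apply_eq hn i _ (tau_val hn i)]
    by_cases h : j = i
    · subst h
      rw [Rmat_apply_eq hn _ _ (tau_tau_val hn j)]
      simp only [Matrix.neg_apply, Matrix.one_apply_eq]
      have hj := j.isLt
      unfold eps
      rcases lt_or_ge (j:ℕ) n with hlt | hge
      · rw [if_pos hlt, tau_val_lt hn hlt, if_neg (by omega)]
        have e2 : (j:ℕ) + n - n = (j:ℕ) := by omega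
        rw [e2]
        nlinarith [neg_one_sq_pow ((j:ℕ))]
      · rw [if_neg (by omega), tau_val_ge hn hge, if_pos (by omega)]
        nlinarith [neg_one_sq_pow ((j:ℕ) - n)]
    · rw [Rmat_apply_ne hn _ j, mul_zero]
      · simp [Matrix.neg_apply, Matrix.one_apply_ne (Ne.symm h)]
      · rw [← tau_tau_val hn i]
        exact fun hcon => h (Fin.ext hcon)
  · intro b _ hne
    rw [Rmat_apply_ne hn i b, zero_mul]
    rw [← tau_val hn i]
    exact fun hcon => hne (Fin.ext hcon)
  · intro h; exact absurd (Finset.mem_univ _) h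

lemma Rmat_isUnit_det (hn : 1 ≤ n) : IsUnit (Rmat n).det := by
  have h : Rmat n * (-(Rmat n)) = 1 := by
    rw [mul_neg, Rmat_mul_self hn]; simp
  exact Matrix.isUnit_det_of_right_inverse h


variable {n : ℕ}

lemma dot_repr (f : (Fin n → ℝ) →ₗ[ℝ] ℝ) (y : Fin n → ℝ) :
    f y = ∑ r, f (Pi.single r (1:ℝ)) * y r := by
  conv_lhs => rw [← Finset.univ_sum_single y]
  rw [map_sum]
  apply Finset.sum_congr rfl
  intro i _
  have h : (Pi.single i (y i) : Fin n → ℝ) = y i • (Pi.single i (1:ℝ) : Fin n → ℝ) := by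
    rw [← Pi.single_smul, smul_eq_mul, mul_one]
  rw [h, f.map_smul, smul_eq_mul, mul_comm]

lemma not_mem_span_iff_exists (s : Set (Fin n → ℝ)) (x : Fin n → ℝ) :
    x ∉ span ℝ s ↔
      ∃ u : Fin n → ℝ, (∀ y ∈ s, ∑ r, u r * y r = 0) ∧ ∑ r, u r * x r ≠ 0 := by
  constructor
  · intro hx
    obtain ⟨f, hfx, hmap⟩ := Submodule.exists_dual_map_eq_bot_of_notMem hx inferInstance
    refine ⟨fun r => f (Pi.single r (1:ℝ)), ?_, ?_⟩
    · intro y hy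
      have h1 : f y ∈ (span ℝ s).map f := ⟨y, subset_span hy, rfl⟩
      rw [hmap, Submodule.mem_bot] at h1
      rw [← dot_repr]; exact h1
    · rw [← dot_repr]; exact hfx
  · rintro ⟨u, hu, hux⟩ hx
    apply hux
    clear hux
    induction hx using Submodule.span_induction with
    | mem z hz => exact hu _ hz
    | zero => simp
    | add a b _ _ ha hb =>
        simp only [Pi.add_apply, mul_add, Finset.sum_add_distrib, ha, hb, add_zero]
    | smul c a _ ha =>
        simp only [Pi.smul_apply, smul_eq_mul]
        have e : ∀ r ∈ Finset.univ, u r * (c * a r) = c * (u r * a r) :=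
          fun r _ => by ring
        rw [Finset.sum_congr rfl e, ← Finset.mul_sum, ha, mul_zero]

lemma ker_eq (hn : 1 ≤ n) (X : Matrix (Fin n) (Fin (2*n)) ℝ)
    (hrank : X.rank = n) (hRdet : IsUnit (Rmat n).det)
    (hlag : X * Rmat n * Xᵀ = 0) (w : Fin (2*n) → ℝ) :
    X.mulVec w = 0 ↔ ∃ u : Fin n → ℝ, w = (Rmat n * Xᵀ).mulVec u := by
  have hXA : X * (Rmat n * Xᵀ) = 0 := by rw [← Matrix.mul_assoc]; exact hlag
  have hle : LinearMap.range (Rmat n * Xᵀ).mulVecLin ≤ LinearMap.ker X.mulVecLin := by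
    rintro x ⟨u, rfl⟩
    simp only [LinearMap.mem_ker, Matrix.mulVecLin_apply, Matrix.mulVec_mulVec, hXA,
      Matrix.zero_mulVec]
  have h1 : Module.finrank ℝ (LinearMap.range (Rmat n * Xᵀ).mulVecLin) = n := by
    have : (Rmat n * Xᵀ).rank = n := by
      rw [Matrix.rank_mul_eq_right_of_isUnit_det _ _ hRdet, Matrix.rank_transpose, hrank]
    exact this
  have h2 : Module.finrank ℝ (LinearMap.ker X.mulVecLin) = n := by
    have hrn := LinearMap.finrank_range_add_finrank_ker X.mulVecLin
    have hfr : Module.finrank ℝ (LinearMap.range X.mulVecLin) = n := hrank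
    have hpi : Module.finrank ℝ (Fin (2*n) → ℝ) = 2*n := by
      simp [Module.finrank_pi]
    omega
  have heq : LinearMap.range (Rmat n * Xᵀ).mulVecLin = LinearMap.ker X.mulVecLin :=
    Submodule.eq_of_le_of_finrank_eq hle (by rw [h1, h2])
  constructor
  · intro h
    have : w ∈ LinearMap.ker X.mulVecLin := h
    rw [← heq] at this
    obtain ⟨u, hu⟩ := this
    exact ⟨u, hu.symm⟩
  · rintro ⟨u, rfl⟩
    exact hle ⟨u, rfl⟩ 

lemma mulVec_eq_sum_smul (X : Matrix (Fin n) (Fin (2*n)) ℝ) (c : Fin (2*n) → ℝ) :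
    X.mulVec c = ∑ k, c k • Xᵀ k := by
  funext i
  have h0 : X.mulVec c i = ∑ k, X i k * c k := rfl
  have h1 : (∑ k, c k • Xᵀ k) i = ∑ k, (c k • Xᵀ k) i := Finset.sum_apply i _ _
  rw [h0, h1]
  simp only [Pi.smul_apply, Matrix.transpose_apply, smul_eq_mul]
  exact Finset.sum_congr rfl (fun k _ => mul_comm _ _)

lemma mem_span_cols_iff (X : Matrix (Fin n) (Fin (2*n)) ℝ) (t0 : Fin (2*n))
    (S : Set (Fin (2*n))) (ht0 : t0 ∉ S) :
    Xᵀ t0 ∈ span ℝ (Xᵀ '' S) ↔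
      ∃ w : Fin (2*n) → ℝ, X.mulVec w = 0 ∧ w t0 ≠ 0 ∧
        ∀ k, k ∉ S → k ≠ t0 → w k = 0 := by
  constructor
  · intro h
    obtain ⟨l, hl, hsum⟩ := (Finsupp.mem_span_image_iff_linearCombination ℝ).mp h
    have hl0 : l t0 = 0 := by
      by_contra h0
      exact ht0 (hl (Finsupp.mem_support_iff.mpr h0))
    refine ⟨fun k => l k - (Pi.single t0 (1:ℝ) : Fin (2*n) → ℝ) k, ?_, ?_, ?_⟩
    · rw [mulVec_eq_sum_smul]
      have e1 : ∑ k, ((l k - (Pi.single t0 (1:ℝ) : Fin (2*n) → ℝ) k) • Xᵀ k)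
          = (∑ k, l k • Xᵀ k) - ∑ k, (Pi.single t0 (1:ℝ) : Fin (2*n) → ℝ) k • Xᵀ k := by
        rw [← Finset.sum_sub_distrib]
        exact Finset.sum_congr rfl (fun k _ => sub_smul _ _ _)
      rw [e1]
      have e2 : ∑ k, (Pi.single t0 (1:ℝ) : Fin (2*n) → ℝ) k • Xᵀ k = Xᵀ t0 := by
        rw [Finset.sum_eq_single t0]
        · simp
        · intro b _ hb; simp [Pi.single_eq_of_ne hb]
        · intro h; exact absurd (Finset.mem_univ _) h
      have e3 : ∑ k, l k • Xᵀ k = Xᵀ t0 := by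
        rw [← hsum]
        show _ = Finsupp.linearCombination ℝ (fun k => Xᵀ k) l
        rw [Finsupp.linearCombination_apply, Finsupp.sum_fintype]
        simp
      rw [e2, e3, sub_self]
    · simp [hl0]
    · intro k hkS hkt
      have : l k = 0 := by
        by_contra h0
        exact hkS (hl (Finsupp.mem_support_iff.mpr h0))
      simp [this, Pi.single_eq_of_ne hkt]
  · rintro ⟨w, hker, hwt0, hsupp⟩
    have hsum : ∑ k, w k • Xᵀ k = 0 := by rw [← mulVec_eq_sum_smul, hker]
    have hsplit : w t0 • Xᵀ t0 + ∑ k ∈ Finset.univ.erase t0, w k • Xᵀ k = 0 := by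
      rw [Finset.add_sum_erase _ (fun k => w k • Xᵀ k) (Finset.mem_univ t0)]
      exact hsum
    have hmem : ∑ k ∈ Finset.univ.erase t0, w k • Xᵀ k ∈ span ℝ (Xᵀ '' S) := by
      apply Submodule.sum_mem
      intro k hk
      have hkt : k ≠ t0 := Finset.ne_of_mem_erase hk
      by_cases hkS : k ∈ S
      · exact Submodule.smul_mem _ _ (subset_span ⟨k, hkS, rfl⟩)
      · rw [hsupp k hkS hkt, zero_smul]; exact Submodule.zero_mem _
    have : Xᵀ t0 = (w t0)⁻¹ • (w t0 • Xᵀ t0) := by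
      rw [inv_smul_smul₀ hwt0]
    rw [this]
    apply Submodule.smul_mem
    have : w t0 • Xᵀ t0 = -(∑ k ∈ Finset.univ.erase t0, w k • Xᵀ k) := by
      rw [eq_neg_iff_add_eq_zero]; exact hsplit
    rw [this]
    exact Submodule.neg_mem _ hmem




variable {n : ℕ}

lemma dualityFin (hn : 1 ≤ n) (X : Matrix (Fin n) (Fin (2*n)) ℝ)
    (hrank : X.rank = n) (hlag : X * Rmat n * Xᵀ = 0)
    (t0 : Fin (2*n)) (S U : Set (Fin (2*n))) (ht0 : t0 ∉ S)
    (hU : ∀ k, k ∈ U ↔ (k ∉ S ∧ k ≠ t0)) :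
    (Xᵀ t0 ∈ span ℝ (Xᵀ '' S) ↔
      Xᵀ (tau n hn t0) ∉ span ℝ (Xᵀ '' (tau n hn '' U))) := by
  rw [mem_span_cols_iff X t0 S ht0, not_mem_span_iff_exists]
  constructor
  · rintro ⟨w, hker, hwt0, hsupp⟩
    obtain ⟨u, rfl⟩ := (ker_eq hn X hrank (Rmat_isUnit_det hn) hlag w).mp hker
    refine ⟨u, ?_, ?_⟩
    · rintro y ⟨-, ⟨k, hkU, rfl⟩, rfl⟩
      obtain ⟨hkS, hkt⟩ := (hU k).mp hkU
      have hw0 : (Rmat n * Xᵀ).mulVec u k = 0 := hsupp k hkS hkt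
      rw [← Matrix.mulVec_mulVec, Rmat_mulVec hn] at hw0
      have hv : Xᵀ.mulVec u (tau n hn k) = 0 :=
        (mul_eq_zero.mp hw0).resolve_left (eps_ne_zero k)
      have hv2 : Xᵀ.mulVec u (tau n hn k) = ∑ r, u r * Xᵀ (tau n hn k) r := by
        have : Xᵀ.mulVec u (tau n hn k) = ∑ r, Xᵀ (tau n hn k) r * u r := rfl
        rw [this]
        exact Finset.sum_congr rfl (fun r _ => mul_comm _ _)
      rw [← hv2]; exact hv
    · have hw : (Rmat n * Xᵀ).mulVec u t0 ≠ 0 := hwt0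
      rw [← Matrix.mulVec_mulVec, Rmat_mulVec hn] at hw
      have hv : Xᵀ.mulVec u (tau n hn t0) ≠ 0 := fun h => hw (by rw [h, mul_zero])
      have hv2 : Xᵀ.mulVec u (tau n hn t0) = ∑ r, u r * Xᵀ (tau n hn t0) r := by
        have : Xᵀ.mulVec u (tau n hn t0) = ∑ r, Xᵀ (tau n hn t0) r * u r := rfl
        rw [this]
        exact Finset.sum_congr rfl (fun r _ => mul_comm _ _)
      rw [← hv2]; exact hv
  · rintro ⟨u, hu, hut0⟩
    refine ⟨(Rmat n * Xᵀ).mulVec u,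
      (ker_eq hn X hrank (Rmat_isUnit_det hn) hlag _).mpr ⟨u, rfl⟩, ?_, ?_⟩
    · rw [← Matrix.mulVec_mulVec, Rmat_mulVec hn]
      have hv2 : Xᵀ.mulVec u (tau n hn t0) = ∑ r, u r * Xᵀ (tau n hn t0) r := by
        have : Xᵀ.mulVec u (tau n hn t0) = ∑ r, Xᵀ (tau n hn t0) r * u r := rfl
        rw [this]
        exact Finset.sum_congr rfl (fun r _ => mul_comm _ _)
      exact mul_ne_zero (eps_ne_zero t0) (by rw [hv2]; exact hut0)
    · intro k hkS hkt
      rw [← Matrix.mulVec_mulVec, Rmat_mulVec hn]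
      have hv2 : Xᵀ.mulVec u (tau n hn k) = ∑ r, u r * Xᵀ (tau n hn k) r := by
        have : Xᵀ.mulVec u (tau n hn k) = ∑ r, Xᵀ (tau n hn k) r * u r := rfl
        rw [this]
        exact Finset.sum_congr rfl (fun r _ => mul_comm _ _)
      have : Xᵀ (tau n hn k) ∈ Xᵀ '' (tau n hn '' U) :=
        ⟨tau n hn k, ⟨k, (hU k).mpr ⟨hkS, hkt⟩, rfl⟩, rfl⟩
      rw [hv2, hu _ this, mul_zero]



variable {n : ℕ}

lemma dvd_emod_sub_self (m x : ℤ) : m ∣ (x % m - x) :=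
  ⟨-(x/m), by rw [Int.emod_def]; ring⟩

lemma rho_ne (hn : 1 ≤ n) {j k : ℤ} (h1 : j ≠ k) (h2 : |j - k| < 2*(n:ℤ)) :
    rho n hn j ≠ rho n hn k := fun he => by
  have := Int.eq_zero_of_abs_lt_dvd ((rho_eq_iff hn).mp he) h2
  omega

lemma rho_exists (hn : 1 ≤ n) (a : ℤ) (k : Fin (2*n)) :
    ∃ j, a ≤ j ∧ j ≤ a + 2*n - 1 ∧ rho n hn j = k := by
  have hpos : (0:ℤ) < 2*(n:ℤ) := by omega
  have hm1 := Int.emod_nonneg ((k:ℤ) + 1 - a) (ne_of_gt hpos)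
  have hm2 := Int.emod_lt_of_pos ((k:ℤ) + 1 - a) hpos
  refine ⟨a + (((k:ℤ) + 1 - a) % (2*(n:ℤ))), by omega, by omega, ?_⟩
  have h1 : rho n hn (a + (((k:ℤ) + 1 - a) % (2*(n:ℤ)))) = rho n hn ((k:ℤ) + 1) := by
    apply (rho_eq_iff hn).mpr
    have e : a + (((k:ℤ) + 1 - a) % (2*(n:ℤ))) - ((k:ℤ) + 1)
        = (((k:ℤ) + 1 - a) % (2*(n:ℤ))) - ((k:ℤ) + 1 - a) := by ring
    rw [e]
    exact dvd_emod_sub_self _ _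
  rw [h1, rho_intCast_add_one hn]

lemma dualityZ (hn : 1 ≤ n) (X : Matrix (Fin n) (Fin (2*n)) ℝ)
    (hrank : X.rank = n) (hlag : X * Rmat n * Xᵀ = 0)
    (col : ℤ → Fin n → ℝ) (hc : ∀ j, col j = Xᵀ (rho n hn j))
    (a b : ℤ) (hab : a ≤ b) (hb : b ≤ a + 2*n - 1) :
    (col a ∈ span ℝ (col '' Icc (a+1) b) ↔
      col (a+n) ∉ span ℝ (col '' Icc (b+n+1) (a+3*n-1))) := by
  have himg : ∀ (c d : ℤ), col '' Icc c d = Xᵀ '' (rho n hn '' Icc c d) := by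
    intro c d
    exact (Set.image_congr (fun j _ => hc j)).trans (Set.image_comp _ _ _)
  set t0 := rho n hn a with ht0def
  set S := rho n hn '' Icc (a+1) b with hSdef
  set U := rho n hn '' Icc (b+1) (a+2*n-1) with hUdef
  have ht0 : t0 ∉ S := by
    rintro ⟨j, hj, hjeq⟩
    rw [mem_Icc] at hj
    exact rho_ne hn (by omega) (by rw [abs_sub_lt_iff]; omega) hjeq
  have hU : ∀ k, k ∈ U ↔ (k ∉ S ∧ k ≠ t0) := by
    intro k
    constructor
    · rintro ⟨j, hj, rfl⟩
      rw [mem_Icc] at hj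
      constructor
      · rintro ⟨j', hj', he⟩
        rw [mem_Icc] at hj'
        exact rho_ne hn (by omega) (by rw [abs_sub_lt_iff]; omega) he
      · exact rho_ne hn (by omega) (by rw [abs_sub_lt_iff]; omega)
    · rintro ⟨hkS, hkt⟩
      obtain ⟨j, hja, hjb, rfl⟩ := rho_exists hn a k
      rcases eq_or_ne j a with rfl | hne
      · exact absurd rfl hkt
      · by_cases hjle : j ≤ b
        · exact absurd ⟨j, mem_Icc.mpr ⟨by omega, hjle⟩, rfl⟩ hkS
        · exact ⟨j, mem_Icc.mpr ⟨by omega, by omega⟩, rfl⟩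
  have hsets : tau n hn '' U = rho n hn '' Icc (b+(n:ℤ)+1) (a+3*(n:ℤ)-1) := by
    ext k
    constructor
    · rintro ⟨-, ⟨j, hj, rfl⟩, rfl⟩
      rw [mem_Icc] at hj
      exact ⟨j + n, mem_Icc.mpr ⟨by omega, by omega⟩, (tau_rho hn j).symm⟩
    · rintro ⟨j, hj, rfl⟩
      rw [mem_Icc] at hj
      refine ⟨rho n hn (j - n), ⟨j - n, mem_Icc.mpr ⟨by omega, by omega⟩, rfl⟩, ?_⟩
      rw [tau_rho hn]
      congr 1
      ring
  have htau : Xᵀ '' (tau n hn '' U) = col '' Icc (b+n+1) (a+3*n-1) := by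
    rw [himg, hsets]
  have hcol_an : col (a + n) = Xᵀ (tau n hn t0) := by
    rw [hc (a+n), ht0def, tau_rho hn]
  rw [hc a, himg, hcol_an, ← htau]
  exact dualityFin hn X hrank hlag t0 S U ht0 hU


end Stmt4Aux
end

section
open Submodule Set

/-- If `X` is a totally nonnegative Lagrangian `n × 2n` matrix of rank `n`, `col j` is the
`2n`-periodic extension of its columns, and `f i` is the least `j ≥ i` such that column `i`
lies in the span of columns `i+1, …, j`, then `i ↦ f i − n` is an involution of `ℤ`. -/
theorem stmt4 (n : ℕ) (hn : 1 ≤ n) (X : Matrix (Fin n) (Fin (2*n)) ℝ)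
    (hrank : X.rank = n)
    (htnn : ∀ I : Finset (Fin (2*n)), I.card = n → 0 ≤ Delta X I)
    (hlag : X * Rmat n * Xᵀ = 0)
    (col : ℤ → Fin n → ℝ)
    (hcol : ∀ j : ℤ, col j = fun r =>
      X r ⟨((j - 1) % (2 * (n : ℤ))).toNat, by
        have hpos : (0 : ℤ) < 2 * (n : ℤ) := by omega
        have h1 := Int.emod_nonneg (j - 1) (ne_of_gt hpos)
        have h2 := Int.emod_lt_of_pos (j - 1) hpos
        omega⟩)
    (f : ℤ → ℤ)
    (hf : ∀ i : ℤ, IsLeast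
      {j : ℤ | i ≤ j ∧ col i ∈ Submodule.span ℝ (col '' Set.Icc (i + 1) j)} (f i)) :
    ∀ i : ℤ, f (f i - n) = i + n := by
  have hc : ∀ j, col j = Xᵀ (Stmt4Aux.rho n hn j) := fun j => by rw [hcol j]; rfl
  have hper : ∀ j : ℤ, col (j + 2*(n:ℤ)) = col j := fun j => by
    rw [hc, hc, Stmt4Aux.rho_add hn]
  have hper' : ∀ j j' : ℤ, j' = j + 2*(n:ℤ) → col j' = col j := by
    rintro j _ rfl; exact hper j
  have hspan_shift : ∀ a b a' b' : ℤ, a' = a + 2*(n:ℤ) → b' = b + 2*(n:ℤ) →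
      col '' Set.Icc a' b' = col '' Set.Icc a b := by
    rintro a b _ _ rfl rfl
    ext y
    simp only [Set.mem_image, Set.mem_Icc]
    constructor
    · rintro ⟨j, hj, rfl⟩
      exact ⟨j - 2*n, by omega, (hper' (j - 2*(n:ℤ)) j (by ring)).symm⟩
    · rintro ⟨j, hj, rfl⟩
      exact ⟨j + 2*n, by omega, hper j⟩
  have hinsert_right : ∀ a b : ℤ, a ≤ b →
      col '' Set.Icc a b = insert (col b) (col '' Set.Icc a (b-1)) := by
    intro a b h
    rw [show Set.Icc a b = insert b (Set.Icc a (b-1)) from by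
      ext x; simp only [Set.mem_Icc, Set.mem_insert_iff]; omega, Set.image_insert_eq]
  have hinsert_left : ∀ a b : ℤ, a ≤ b →
      col '' Set.Icc a b = insert (col a) (col '' Set.Icc (a+1) b) := by
    intro a b h
    rw [show Set.Icc a b = insert a (Set.Icc (a+1) b) from by
      ext x; simp only [Set.mem_Icc, Set.mem_insert_iff]; omega, Set.image_insert_eq]
  have hempty : ∀ a b : ℤ, b < a → ∀ x : Fin n → ℝ,
      (x ∈ Submodule.span ℝ (col '' Set.Icc a b) ↔ x = 0) := by
    intro a b h x
    rw [Set.Icc_eq_empty (by omega), Set.image_empty, Submodule.span_empty,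
      Submodule.mem_bot]
  have hdual : ∀ a b : ℤ, a ≤ b → b ≤ a + 2*(n:ℤ) - 1 →
      (col a ∈ Submodule.span ℝ (col '' Set.Icc (a+1) b) ↔
        col (a+(n:ℤ)) ∉ Submodule.span ℝ (col '' Set.Icc (b+(n:ℤ)+1) (a+3*(n:ℤ)-1))) :=
    fun a b hab hb => Stmt4Aux.dualityZ hn X hrank hlag col hc a b hab hb
  intro i
  obtain ⟨⟨hile, hmem⟩, hlb⟩ := hf i
  set m := f i with hm
  have hub : m ≤ i + 2*(n:ℤ) := by
    apply hlb
    refine ⟨by omega, Submodule.subset_span ?_⟩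
    exact ⟨i + 2*n, Set.mem_Icc.mpr ⟨by omega, le_refl _⟩, hper i⟩
  rcases eq_or_lt_of_le hile with hcase1 | hlt
  · -- m = i : col i = 0
    have hcoli : col i = 0 := by
      rw [← hempty (i+1) i (by omega)]
      rw [hcase1] at hmem ⊢
      exact hmem
    apply (hf (m - n)).unique
    constructor
    · refine ⟨by omega, Submodule.subset_span ?_⟩
      refine ⟨m - n + 2*n, Set.mem_Icc.mpr ⟨by omega, by omega⟩, hper (m - n)⟩
    · intro j hj
      obtain ⟨hj1, hj2⟩ := hj
      by_contra hcon
      push_neg at hcon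
      have hmono : col (m - (n:ℤ)) ∈
          Submodule.span ℝ (col '' Set.Icc (m - (n:ℤ) + 1) (i + (n:ℤ) - 1)) :=
        Submodule.span_mono (Set.image_mono (Set.Icc_subset_Icc_right (by omega))) hj2
      rw [← hcase1] at hmono
      have hd := hdual (i - (n:ℤ)) (i + (n:ℤ) - 1) (by omega) (by omega)
      have hd2 := hd.mp hmono
      apply hd2
      rw [show i - (n:ℤ) + (n:ℤ) = i from by ring]
      rw [hempty _ _ (by omega)]
      exact hcoli
  · -- i < m
    have hnot : col i ∉ Submodule.span ℝ (col '' Set.Icc (i+1) (m-1)) := by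
      intro hmemm
      have := hlb ⟨by omega, hmemm⟩
      omega
    rcases eq_or_lt_of_le hub with hcase2 | hlt2
    · -- m = i + 2n : col (i+n) = 0
      have hcoln : col (i + (n:ℤ)) = 0 := by
        have hd := hdual i (i + 2*(n:ℤ) - 1) (by omega) (by omega)
        have hnot' : col i ∉ Submodule.span ℝ (col '' Set.Icc (i+1) (i + 2*(n:ℤ) - 1)) := by
          rw [show i + 2*(n:ℤ) - 1 = m - 1 from by omega]
          exact hnot
        by_contra h0
        exact hnot' (hd.mpr (by
          rw [hempty _ _ (by omega)]
          intro he
          exact h0 he))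
      apply (hf (m - n)).unique
      constructor
      · refine ⟨by omega, ?_⟩
        rw [hempty _ _ (by omega)]
        rw [show m - (n:ℤ) = i + (n:ℤ) from by omega]
        exact hcoln
      · intro j hj
        have := hj.1
        omega
    · -- i < m < i + 2n : main case
      have hmem' : col i ∈ Submodule.span ℝ
          (insert (col m) (col '' Set.Icc (i+1) (m-1))) := by
        rw [← hinsert_right (i+1) m (by omega)]
        exact hmem
      have hexch1 : col m ∈ Submodule.span ℝ (col '' Set.Icc i (m-1)) := by
        rw [hinsert_left i (m-1) (by omega)]
        exact mem_span_insert_exchange hmem' hnot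
      have hA : col (i + (n:ℤ)) ∉
          Submodule.span ℝ (col '' Set.Icc (m+(n:ℤ)+1) (i+3*(n:ℤ)-1)) :=
        (hdual i m (by omega) (by omega)).mp hmem
      have hB : col (i + (n:ℤ)) ∈
          Submodule.span ℝ (col '' Set.Icc (m+(n:ℤ)) (i+3*(n:ℤ)-1)) := by
        have hd := hdual i (m-1) (by omega) (by omega)
        have := not_not.mp (fun hM => hnot (hd.mpr hM))
        rwa [show m - 1 + (n:ℤ) + 1 = m + (n:ℤ) from by ring] at this
      apply (hf (m - n)).unique
      constructor
      · refine ⟨by omega, ?_⟩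
        have h1 : col (m - (n:ℤ)) = col (m + (n:ℤ)) :=
          (hper' (m - (n:ℤ)) (m + (n:ℤ)) (by ring)).symm
        have hss : col '' Set.Icc (m-(n:ℤ)+1) (i+(n:ℤ))
            = col '' Set.Icc (m+(n:ℤ)+1) (i+3*(n:ℤ)) :=
          (hspan_shift (m-(n:ℤ)+1) (i+(n:ℤ)) (m+(n:ℤ)+1) (i+3*(n:ℤ))
            (by ring) (by ring)).symm
        rw [h1, hss, hinsert_right (m+(n:ℤ)+1) (i+3*(n:ℤ)) (by omega)]
        have h2 : col (i + 3*(n:ℤ)) = col (i + (n:ℤ)) :=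
          hper' (i+(n:ℤ)) (i+3*(n:ℤ)) (by ring)
        rw [show i + 3*(n:ℤ) - 1 = i + 3*(n:ℤ) - 1 from rfl, h2]
        have hB' : col (i + (n:ℤ)) ∈ Submodule.span ℝ
            (insert (col (m+(n:ℤ))) (col '' Set.Icc (m+(n:ℤ)+1) (i+3*(n:ℤ)-1))) := by
          rw [← hinsert_left (m+(n:ℤ)) (i+3*(n:ℤ)-1) (by omega)]
          exact hB
        exact mem_span_insert_exchange hB' hA
      · intro j hj
        obtain ⟨hj1, hj2⟩ := hj
        by_contra hcon
        push_neg at hcon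
        have hmono : col (m - (n:ℤ)) ∈
            Submodule.span ℝ (col '' Set.Icc (m - (n:ℤ) + 1) (i + (n:ℤ) - 1)) :=
          Submodule.span_mono (Set.image_mono (Set.Icc_subset_Icc_right (by omega))) hj2
        have hshift : col (m + (n:ℤ)) ∈
            Submodule.span ℝ (col '' Set.Icc (m + (n:ℤ) + 1) (i + 3*(n:ℤ) - 1)) := by
          rw [hspan_shift (m-(n:ℤ)+1) (i+(n:ℤ)-1) (m+(n:ℤ)+1) (i+3*(n:ℤ)-1)
            (by ring) (by ring)]
          rw [hper' (m - (n:ℤ)) (m + (n:ℤ)) (by ring)]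
          exact hmono
        have hd := hdual (m + (n:ℤ)) (i + 3*(n:ℤ) - 1) (by omega) (by omega)
        have hd2 := hd.mp hshift
        apply hd2
        rw [show m + (n:ℤ) + (n:ℤ) = m + 2*(n:ℤ) from by ring]
        rw [show i + 3*(n:ℤ) - 1 + (n:ℤ) + 1 = i + 4*(n:ℤ) from by ring]
        rw [show m + (n:ℤ) + 3*(n:ℤ) - 1 = m + 4*(n:ℤ) - 1 from by ring]
        have e1 : col (m + 2*(n:ℤ)) = col m := hper' m (m + 2*(n:ℤ)) (by ring)
        rw [e1]
        have e2 : col '' Set.Icc (i + 4*(n:ℤ)) (m + 4*(n:ℤ) - 1)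
            = col '' Set.Icc i (m - 1) := by
          rw [hspan_shift (i + 2*(n:ℤ)) (m + 2*(n:ℤ) - 1) _ _ (by ring) (by ring),
            hspan_shift i (m - 1) _ _ (by ring) (by ring)]
        rw [e2]
        exact hexch1

end
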